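/- Let κ, θ be regular cardinals with θ⁺ < κ, and assume NS^θ_κ is κ⁺-saturated. Suppose S ⊆ S^θ_κ is stationary and ⟨S_α : α ∈ S⟩ is a ◊'_club(S)-sequence, i.e., for every club C ⊆ κ the set N(C) = {α ∈ S : ∃β < α, S_α \ β ⊆ C} is stationary. Then there exists a stationary S* ⊆ S such that for every club C ⊆ κ, the set N(C) ∩ S* contains a club intersected with S*. -/

import Mathlib

open Ordinal Set Cardinal

/-- `C` is a club (closed unbounded) subset of the ordinal `κ`. -/
def IsClubIn (C : Set Ordinal) (κ : Ordinal) : Prop :=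
  C ⊆ Set.Iio κ ∧ (∀ β < κ, ∃ γ ∈ C, β < γ) ∧
    (∀ α < κ, α ≠ 0 → (∀ β < α, ∃ γ ∈ C, β < γ ∧ γ < α) → α ∈ C)

/-- `S` is stationary in `κ`: it meets every club of `κ`. -/
def IsStationaryIn (S : Set Ordinal) (κ : Ordinal) : Prop :=
  ∀ C, IsClubIn C κ → (S ∩ C).Nonempty

/-- `S^θ_κ`, the set of ordinals below `κ` of cofinality `θ`. -/
def cofSet (κ θ : Cardinal) : Set Ordinal :=
  {α | α < κ.ord ∧ α.cof = θ}

/-- `NS^θ_κ` is `κ⁺`-saturated: there is no family of `κ⁺` many stationary subsets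
of `S^θ_κ` with pairwise nonstationary intersections. -/
def NSRestrictedSaturated (κ θ : Cardinal.{0}) : Prop :=
  ¬ ∃ A : Ordinal.{0} → Set Ordinal.{0},
      (∀ i < (Order.succ κ).ord, A i ⊆ cofSet κ θ ∧ IsStationaryIn (A i) κ.ord) ∧
      (∀ i j, i < (Order.succ κ).ord → j < (Order.succ κ).ord → i ≠ j →
        ¬ IsStationaryIn (A i ∩ A j) κ.ord)

namespace C21

attribute [local instance] Classical.propDecidable

variable {ν : Ordinal.{0}}

-- (club lemmas inserted here)

lemma isClubIn_Iio (hν : Order.IsSuccLimit ν) : IsClubIn (Set.Iio ν) ν :=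
  ⟨subset_rfl, fun β hβ => ⟨Order.succ β, hν.succ_lt hβ, Order.lt_succ β⟩,
    fun α hα _ _ => hα⟩

lemma isClubIn_bInter (hcof : ℵ₀ < ν.cof) {γ : Ordinal} (hγ : γ.card < ν.cof)
    {f : Ordinal → Set Ordinal} (hf : ∀ ξ < γ, IsClubIn (f ξ) ν) :
    IsClubIn {α | α < ν ∧ ∀ ξ < γ, α ∈ f ξ} ν := by
  have hν : Order.IsSuccLimit ν := Ordinal.aleph0_le_cof.mp hcof.le
  refine ⟨fun α hα => hα.1, ?_, ?_⟩
  · intro β hβ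
    have hp : ∀ ξ δ, ∃ y, ξ < γ → δ < ν → y ∈ f ξ ∧ δ < y ∧ y < ν := by
      intro ξ δ
      by_cases h : ξ < γ ∧ δ < ν
      · obtain ⟨y, hy, hδy⟩ := (hf ξ h.1).2.1 δ h.2
        exact ⟨y, fun _ _ => ⟨hy, hδy, (hf ξ h.1).1 hy⟩⟩
      · exact ⟨0, fun h1 h2 => absurd ⟨h1, h2⟩ h⟩
    choose p hp using hp
    set g : ℕ → Ordinal := fun n =>
      Nat.rec β (fun _ x => max (Ordinal.bsup γ (fun ξ _ => p ξ x)) (Order.succ x)) n with hg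
    have hgs : ∀ n, g (n+1) = max (Ordinal.bsup γ (fun ξ _ => p ξ (g n))) (Order.succ (g n)) :=
      fun n => rfl
    have hglt : ∀ n, g n < ν := by
      intro n; induction n with
      | zero => exact hβ
      | succ n ih =>
        rw [hgs]
        refine max_lt (Ordinal.bsup_lt_ord hγ ?_) (hν.succ_lt ih)
        intro ξ hξ; exact (hp ξ (g n) hξ ih).2.2
    have hgmono : ∀ n, g n < g (n+1) := fun n =>
      lt_of_lt_of_le (Order.lt_succ _) (le_trans (le_max_right _ _) (hgs n).ge)
    set s := iSup g with hs
    have hsν : s < ν := Ordinal.iSup_lt_of_lt_cof (by rw [Cardinal.mk_nat]; exact hcof) hglt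
    have hgls : ∀ n, g n < s := fun n => lt_of_lt_of_le (hgmono n) (Ordinal.le_iSup g (n+1))
    refine ⟨s, ⟨hsν, ?_⟩, hgls 0⟩
    intro ξ hξ
    refine (hf ξ hξ).2.2 s hsν (lt_of_le_of_lt zero_le (hgls 0)).ne' ?_
    intro β' hβ'
    obtain ⟨n, hn⟩ := Ordinal.lt_iSup_iff.mp hβ'
    refine ⟨p ξ (g n), (hp ξ (g n) hξ (hglt n)).1,
      lt_trans hn (hp ξ (g n) hξ (hglt n)).2.1, ?_⟩
    calc p ξ (g n) ≤ Ordinal.bsup γ (fun ξ _ => p ξ (g n)) := Ordinal.le_bsup _ ξ hξ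
    _ ≤ g (n+1) := le_trans (le_max_left _ _) (hgs n).ge
    _ < s := hgls (n+1)
  · intro α hα hα0 happ
    refine ⟨hα, fun ξ hξ => (hf ξ hξ).2.2 α hα hα0 ?_⟩
    intro β hβ
    obtain ⟨c, hc, hβc, hcα⟩ := happ β hβ
    exact ⟨c, hc.2 ξ hξ, hβc, hcα⟩

lemma isClubIn_diag (hcof : ℵ₀ < ν.cof) (hsmall : ∀ δ < ν, δ.card < ν.cof)
    {f : Ordinal → Set Ordinal} (hf : ∀ ξ, IsClubIn (f ξ) ν) :
    IsClubIn {α | α < ν ∧ 0 < α ∧ ∀ ξ < α, α ∈ f ξ} ν := by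
  have hν : Order.IsSuccLimit ν := Ordinal.aleph0_le_cof.mp hcof.le
  refine ⟨fun α hα => hα.1, ?_, ?_⟩
  · intro β hβ
    have step : ∀ x : {x : Ordinal // x < ν},
        ∃ y : {x : Ordinal // x < ν}, x.1 < y.1 ∧ ∀ ξ < x.1, y.1 ∈ f ξ := by
      intro x
      have hclub := isClubIn_bInter hcof (hsmall x.1 x.2) (f := f) (fun ξ _ => hf ξ)
      obtain ⟨y, hy, hxy⟩ := hclub.2.1 x.1 x.2
      exact ⟨⟨y, hy.1⟩, hxy, hy.2⟩
    choose st hst1 hst2 using step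
    set g : ℕ → {x : Ordinal // x < ν} := fun n =>
      Nat.rec ⟨Order.succ β, hν.succ_lt hβ⟩ (fun _ x => st x) n with hgdef
    have hgs : ∀ n, g (n+1) = st (g n) := fun n => rfl
    have hmono : ∀ n, (g n).1 < (g (n+1)).1 := fun n => hst1 (g n)
    have hm : StrictMono (fun n => (g n).1) := strictMono_nat_of_lt_succ hmono
    set s := iSup (fun n => (g n).1) with hs
    have hsν : s < ν := Ordinal.iSup_lt_of_lt_cof (by rw [Cardinal.mk_nat]; exact hcof) (fun n => (g n).2)
    have hgls : ∀ n, (g n).1 < s := fun n => lt_of_lt_of_le (hmono n) (Ordinal.le_iSup _ (n+1))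
    have hβs : β < s := lt_trans (Order.lt_succ β) (hgls 0)
    have hspos : 0 < s := lt_of_le_of_lt zero_le hβs
    refine ⟨s, ⟨hsν, hspos, ?_⟩, hβs⟩
    intro ξ hξ
    obtain ⟨n, hn⟩ := Ordinal.lt_iSup_iff.mp hξ
    refine (hf ξ).2.2 s hsν hspos.ne' ?_
    intro β' hβ'
    obtain ⟨k, hk⟩ := Ordinal.lt_iSup_iff.mp hβ'
    refine ⟨(g (max n k + 1)).1, ?_, ?_, hgls (max n k + 1)⟩
    · exact hst2 (g (max n k)) ξ (lt_of_lt_of_le hn (hm.monotone (le_max_left n k)))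
    · exact lt_of_lt_of_le hk (le_of_lt
        (lt_of_le_of_lt (hm.monotone (le_max_right n k)) (hmono (max n k))))
  · intro α hα hα0 happ
    refine ⟨hα, pos_iff_ne_zero.mpr hα0, ?_⟩
    intro ξ hξ
    refine (hf ξ).2.2 α hα hα0 ?_
    intro β hβ
    obtain ⟨c, hc, h1, h2⟩ := happ (max β ξ) (max_lt hβ hξ)
    exact ⟨c, hc.2.2 ξ (lt_of_le_of_lt (le_max_right β ξ) h1),
      lt_of_le_of_lt (le_max_left β ξ) h1, h2⟩

lemma isClubIn_inter (hcof : ℵ₀ < ν.cof) {C1 C2 : Set Ordinal}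
    (h1 : IsClubIn C1 ν) (h2 : IsClubIn C2 ν) : IsClubIn (C1 ∩ C2) ν := by
  have h2card : ((2 : Ordinal)).card < ν.cof := by
    have : ((2 : Ordinal)).card = 2 := by simp
    rw [this]
    exact lt_trans (Cardinal.nat_lt_aleph0 2) hcof
  have key := isClubIn_bInter hcof h2card
    (f := fun ξ => if ξ = 0 then C1 else C2) (by
      intro ξ _
      by_cases h : ξ = 0 <;> simp [h, h1, h2])
  have : {α | α < ν ∧ ∀ ξ < (2:Ordinal), α ∈ (if ξ = 0 then C1 else C2)} = C1 ∩ C2 := by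
    ext α
    constructor
    · intro hα
      have e0 := hα.2 0 (by norm_num)
      have e1 := hα.2 1 (by norm_num)
      simp only [if_pos rfl] at e0
      simp only [one_ne_zero, if_false] at e1
      exact ⟨e0, e1⟩
    · intro hα
      refine ⟨h1.1 hα.1, ?_⟩
      intro ξ hξ
      have : ξ = 0 ∨ ξ = 1 := by
        refine Ordinal.le_one_iff.mp (Order.lt_succ_iff.mp ?_)
        have h21 : (2:Ordinal) = Order.succ 1 := by
          rw [← Ordinal.add_one_eq_succ]; norm_num
        rwa [h21] at hξ
      rcases this with h | h <;> simp [h, hα.1, hα.2]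
  rwa [this] at key

lemma isClubIn_Ioo (hν : Order.IsSuccLimit ν) {γ : Ordinal} (hγ : γ < ν) :
    IsClubIn {α | γ < α ∧ α < ν} ν := by
  refine ⟨fun α h => h.2, ?_, ?_⟩
  · intro β hβ
    exact ⟨Order.succ (max β γ), ⟨lt_of_le_of_lt (le_max_right β γ) (Order.lt_succ _),
      hν.succ_lt (max_lt hβ hγ)⟩, lt_of_le_of_lt (le_max_left β γ) (Order.lt_succ _)⟩
  · intro α hα hα0 happ
    obtain ⟨c, hc, _, hcα⟩ := happ 0 (pos_iff_ne_zero.mpr hα0)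
    exact ⟨lt_trans hc.1 hcα, hα⟩

lemma not_stationary_of_bounded (hν : Order.IsSuccLimit ν) {X : Set Ordinal} {γ : Ordinal}
    (hγ : γ < ν) (hX : X ⊆ Set.Iic γ) : ¬ IsStationaryIn X ν := by
  intro h
  obtain ⟨α, hαX, hαc⟩ := h _ (isClubIn_Ioo hν hγ)
  exact absurd (hX hαX) (not_le.mpr hαc.1)



noncomputable def buildC (ν : Ordinal.{0}) (F : Set Ordinal.{0} → Set Ordinal.{0}) :
    Ordinal.{0} → Set Ordinal.{0} :=
  WellFounded.fix wellFounded_lt fun i rec =>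
    (fun D => D ∩ F D)
      (if h : ∃ g : Ordinal.{0} → Ordinal.{0},
          (∀ ξ, g ξ < i) ∧ ∀ j < i, ∃ ξ < ν, g ξ = j then
        {α | α < ν ∧ 0 < α ∧ ∀ ξ < α, α ∈ rec (h.choose ξ) (h.choose_spec.1 ξ)}
      else Set.Iio ν)

noncomputable def buildD (ν : Ordinal.{0}) (F : Set Ordinal.{0} → Set Ordinal.{0})
    (i : Ordinal.{0}) : Set Ordinal.{0} :=
  if h : ∃ g : Ordinal.{0} → Ordinal.{0},
      (∀ ξ, g ξ < i) ∧ ∀ j < i, ∃ ξ < ν, g ξ = j then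
    {α | α < ν ∧ 0 < α ∧ ∀ ξ < α, α ∈ buildC ν F (h.choose ξ)}
  else Set.Iio ν

theorem buildC_eq (ν : Ordinal.{0}) (F : Set Ordinal.{0} → Set Ordinal.{0}) (i : Ordinal.{0}) :
    buildC ν F i = buildD ν F i ∩ F (buildD ν F i) := by
  rw [buildC, WellFounded.fix_eq]
  rfl

end C21

open C21 in
/-- Claim 2.1: assuming `NS^θ_κ` is `κ⁺`-saturated, every
`◊'_club(S)`-sequence guesses clubs on a club relative to some stationary `S* ⊆ S`. -/
theorem claim_two_one (κ θ : Cardinal.{0}) (hκ : κ.IsRegular) (hθ : θ.IsRegular)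
    (hθκ : Order.succ θ < κ)
    (hsat : NSRestrictedSaturated κ θ)
    (S : Set Ordinal.{0}) (hS : S ⊆ cofSet κ θ) (hSstat : IsStationaryIn S κ.ord)
    (Sseq : Ordinal.{0} → Set Ordinal.{0})
    (hsub : ∀ α ∈ S, Sseq α ⊆ Set.Iio α)
    (hguess : ∀ C, IsClubIn C κ.ord →
      IsStationaryIn {α ∈ S | ∃ β < α, ∀ γ ∈ Sseq α, β ≤ γ → γ ∈ C} κ.ord) :
    ∃ Sstar : Set Ordinal.{0}, Sstar ⊆ S ∧ IsStationaryIn Sstar κ.ord ∧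
      ∀ C, IsClubIn C κ.ord →
        ∃ D, IsClubIn D κ.ord ∧
          D ∩ Sstar ⊆ {α ∈ S | ∃ β < α, ∀ γ ∈ Sseq α, β ≤ γ → γ ∈ C} ∩ Sstar := by
  classical
  set ν := κ.ord with hνdef
  have hℵκ : ℵ₀ < κ := lt_of_le_of_lt hθ.aleph0_le (lt_trans (Order.lt_succ θ) hθκ)
  have hcof : ν.cof = κ := hκ.cof_eq
  have hcofℵ : ℵ₀ < ν.cof := by rw [hcof]; exact hℵκ
  have hνlim : Order.IsSuccLimit ν := Ordinal.aleph0_le_cof.mp hcofℵ.le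
  have hsmall : ∀ δ < ν, δ.card < ν.cof := fun δ hδ => by
    rw [hcof]; exact Cardinal.lt_ord.mp hδ
  set N : Set Ordinal.{0} → Set Ordinal.{0} :=
    fun Cl => {α ∈ S | ∃ β < α, ∀ γ ∈ Sseq α, β ≤ γ → γ ∈ Cl} with hNdef
  have hguessN : ∀ Cl, IsClubIn Cl ν → IsStationaryIn (N Cl) ν := by
    intro Cl hCl
    rw [hNdef]
    exact hguess Cl hCl
  have hNsub : ∀ Cl, N Cl ⊆ S := by
    intro Cl α hα
    rw [hNdef] at hα
    exact hα.1
  have hNmono : ∀ Cl Cl', Cl ⊆ Cl' → N Cl ⊆ N Cl' := by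
    intro Cl Cl' h α hα
    rw [hNdef] at hα ⊢
    obtain ⟨hαS, β, hβ, hspec⟩ := hα
    exact ⟨hαS, β, hβ, fun γ hγ hle => h (hspec γ hγ hle)⟩
  have hNalmost : ∀ Cl Cl' γ0, (Cl \ Set.Iio γ0 ⊆ Cl') →
      N Cl \ Set.Iic γ0 ⊆ N Cl' := by
    intro Cl Cl' γ0 h α hα
    obtain ⟨hα1, hα2⟩ := hα
    rw [hNdef] at hα1 ⊢
    obtain ⟨hαS, β, hβ, hspec⟩ := hα1
    have hγα : γ0 < α := not_le.mp hα2
    have hαlim : Order.IsSuccLimit α := Ordinal.aleph0_le_cof.mp (by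
      rw [(hS hαS).2]; exact hθ.aleph0_le)
    refine ⟨hαS, max β (Order.succ γ0), max_lt hβ (hαlim.succ_lt hγα), ?_⟩
    intro γ hγ hle
    refine h ⟨hspec γ hγ (le_trans (le_max_left _ _) hle), ?_⟩
    simp only [Set.mem_Iio, not_lt]
    exact le_trans (le_of_lt (Order.lt_succ γ0)) (le_trans (le_max_right _ _) hle)
  by_contra hcon
  -- failure function
  have hfail : ∀ T, T ⊆ S → IsStationaryIn T ν →
      ∃ Cl, IsClubIn Cl ν ∧ IsStationaryIn (T \ N Cl) ν := by
    intro T hTS hTstat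
    by_contra hno
    push_neg at hno
    apply hcon
    refine ⟨T, hTS, hTstat, ?_⟩
    intro C hC
    have h1 := hno C hC
    unfold IsStationaryIn at h1
    push_neg at h1
    obtain ⟨D, hD, hDempty⟩ := h1
    refine ⟨D, hD, ?_⟩
    intro α hα
    by_contra hαn
    have hαT : α ∈ T := hα.2
    have hαNC : α ∉ N C := fun h => hαn ⟨h, hαT⟩
    rw [Set.eq_empty_iff_forall_notMem] at hDempty
    exact hDempty α ⟨⟨hαT, hαNC⟩, hα.1⟩
  have he' : ∀ T : Set Ordinal.{0}, ∃ Cl, T ⊆ S → IsStationaryIn T ν →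
      IsClubIn Cl ν ∧ IsStationaryIn (T \ N Cl) ν := by
    intro T
    by_cases h : T ⊆ S ∧ IsStationaryIn T ν
    · obtain ⟨Cl, h1, h2⟩ := hfail T h.1 h.2
      exact ⟨Cl, fun _ _ => ⟨h1, h2⟩⟩
    · exact ⟨Set.Iio ν, fun h1 h2 => absurd ⟨h1, h2⟩ h⟩
  choose e he using he'
  set F : Set Ordinal.{0} → Set Ordinal.{0} := fun T => e (N T) with hF
  -- main induction: everything is a club
  have hclub : ∀ i, IsClubIn (buildD ν F i) ν ∧ IsClubIn (buildC ν F i) ν := by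
    intro i
    induction i using Ordinal.induction with
    | _ i IH =>
      have hDclub : IsClubIn (buildD ν F i) ν := by
        unfold buildD
        split
        · next h =>
          exact isClubIn_diag hcofℵ hsmall
            (f := fun ξ => buildC ν F (h.choose ξ))
            (fun ξ => (IH _ (h.choose_spec.1 ξ)).2)
        · exact isClubIn_Iio hνlim
      have hNstat : IsStationaryIn (N (buildD ν F i)) ν := hguessN _ hDclub
      have hFclub : IsClubIn (F (buildD ν F i)) ν := by
        rw [hF]
        exact (he (N (buildD ν F i)) (hNsub _) hNstat).1
      exact ⟨hDclub, by rw [buildC_eq]; exact isClubIn_inter hcofℵ hDclub hFclub⟩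
  -- surjections exist below κ⁺
  have hGex : ∀ i, 0 < i → i < (Order.succ κ).ord →
      ∃ g : Ordinal.{0} → Ordinal.{0}, (∀ ξ, g ξ < i) ∧ ∀ j < i, ∃ ξ < ν, g ξ = j := by
    intro i hi0 hiκ
    have hcard : i.card ≤ κ := Order.lt_succ_iff.mp (Cardinal.lt_ord.mp hiκ)
    have hmk : #(Set.Iio i) ≤ #(Set.Iio ν) := by
      rw [Ordinal.mk_Iio_ordinal, Ordinal.mk_Iio_ordinal]
      refine Cardinal.lift_le.mpr ?_
      rw [hνdef, Cardinal.card_ord]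
      exact hcard
    obtain ⟨emb⟩ := (Cardinal.le_def _ _).mp hmk
    haveI : Nonempty (Set.Iio i) := ⟨⟨0, hi0⟩⟩
    set finv : Set.Iio ν → Set.Iio i := Function.invFun emb with hfinv
    refine ⟨fun ξ => if h : ξ < ν then (finv ⟨ξ, h⟩ : Ordinal) else 0, ?_, ?_⟩
    · intro ξ
      dsimp only
      by_cases h : ξ < ν
      · rw [dif_pos h]; exact (finv ⟨ξ, h⟩).2
      · rw [dif_neg h]; exact hi0
    · intro j hj
      refine ⟨(emb ⟨j, hj⟩ : Ordinal), (emb ⟨j, hj⟩).2, ?_⟩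
      dsimp only
      rw [dif_pos (show ((emb ⟨j, hj⟩ : Set.Iio ν) : Ordinal) < ν from (emb ⟨j, hj⟩).2)]
      have h1 : (⟨(emb ⟨j, hj⟩ : Ordinal), (emb ⟨j, hj⟩).2⟩ : Set.Iio ν) = emb ⟨j, hj⟩ :=
        Subtype.ext rfl
      rw [h1, hfinv]
      have h2 : Function.invFun emb (emb ⟨j, hj⟩) = ⟨j, hj⟩ :=
        Function.leftInverse_invFun emb.injective ⟨j, hj⟩
      rw [h2]
  -- almost-containment of D_i in earlier C_j
  have hDsub : ∀ i j, j < i → i < (Order.succ κ).ord →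
      ∃ ξ0 < ν, buildD ν F i \ Set.Iic ξ0 ⊆ buildC ν F j := by
    intro i j hji hiκ
    have hg := hGex i (lt_of_le_of_lt (zero_le (a := j)) hji) hiκ
    obtain ⟨ξ0, hξ0, hgξ0⟩ := hg.choose_spec.2 j hji
    refine ⟨ξ0, hξ0, ?_⟩
    intro α hα
    obtain ⟨hα1, hα2⟩ := hα
    rw [buildD, dif_pos hg] at hα1
    have := hα1.2.2 ξ0 (not_le.mp hα2)
    rwa [hgξ0] at this
  -- the almost disjoint family
  set A : Ordinal.{0} → Set Ordinal.{0} :=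
    fun i => N (buildD ν F i) \ N (buildC ν F i) with hA
  have hAstat : ∀ i, A i ⊆ cofSet κ θ ∧ IsStationaryIn (A i) ν := by
    intro i
    have hDclub := (hclub i).1
    have hNstat := hguessN _ hDclub
    have hespec := he (N (buildD ν F i)) (hNsub _) hNstat
    constructor
    · intro α hα
      exact hS (hNsub _ hα.1)
    · intro Cl hCl
      obtain ⟨α, hα1, hα2⟩ := hespec.2 Cl hCl
      refine ⟨α, ⟨hα1.1, fun hmem => hα1.2 ?_⟩, hα2⟩
      refine hNmono (buildC ν F i) (e (N (buildD ν F i))) ?_ hmem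
      rw [buildC_eq, hF]
      exact Set.inter_subset_right
  have hApair : ∀ i j, i < (Order.succ κ).ord → j < i →
      ¬ IsStationaryIn (A i ∩ A j) ν := by
    intro i j hi hji
    obtain ⟨ξ0, hξ0ν, hsub'⟩ := hDsub i j hji hi
    apply not_stationary_of_bounded hνlim (γ := Order.succ ξ0) (hνlim.succ_lt hξ0ν)
    intro α hα
    by_contra hle
    have h1 : α ∈ N (buildD ν F i) := hα.1.1
    have h2 : α ∉ N (buildC ν F j) := hα.2.2
    have hsub'' : buildD ν F i \ Set.Iio (Order.succ ξ0) ⊆ buildC ν F j := by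
      rw [Order.Iio_succ]
      exact hsub'
    exact h2 (hNalmost _ _ (Order.succ ξ0) hsub'' ⟨h1, hle⟩)
  exact hsat ⟨A, fun i _ => hAstat i, fun i j hi hj hne => by
    rcases hne.lt_or_gt with h | h
    · rw [Set.inter_comm]
      exact hApair j i hj h
    · exact hApair i j hi h⟩
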